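/- For Θ ∈ R and the states ψ = sin Θ |0000⟩ + cos Θ |1111⟩ and φ_γ = sin Θ |0000⟩ + e^{iγ} cos Θ |1111⟩ in (C²)^⊗4, all two-qubit reduced density matrices of φ_γ equal those of ψ, and the fidelity |⟨ψ|φ_γ⟩|² = |sin²Θ + e^{iγ}cos²Θ|² is minimized over γ at γ = π, with minimum value cos²(2Θ). -/

import Mathlib

open Matrix Complex

/-- Two-qubit reduced density matrix of a four-qubit pure state `ψ`, keeping qubits
`j` and `k` and tracing out the other two qubits. -/
noncomputable def rdm2 (ψ : (Fin 4 → Fin 2) → ℂ) (j k : Fin 4) :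
    Matrix (Fin 2 × Fin 2) (Fin 2 × Fin 2) ℂ :=
  fun a b => ∑ f : Fin 4 → Fin 2,
    if f j = a.1 ∧ f k = a.2 then
      ψ f * (starRingEnd ℂ) (ψ (Function.update (Function.update f j b.1) k b.2))
    else 0

/-- The generalized GHZ state `sin Θ |0000⟩ + e^{iγ} cos Θ |1111⟩`. -/
noncomputable def ghzPhase (Θ γ : ℝ) : (Fin 4 → Fin 2) → ℂ :=
  fun f => if f = (fun _ => 0) then (Real.sin Θ : ℂ)
    else if f = (fun _ => 1) then Complex.exp (γ * I) * (Real.cos Θ : ℂ) else 0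

/-- Inner product `⟨ψ|φ⟩` of four-qubit states. -/
noncomputable def inner4 (ψ φ : (Fin 4 → Fin 2) → ℂ) : ℂ :=
  ∑ f : Fin 4 → Fin 2, (starRingEnd ℂ) (ψ f) * φ f

lemma exists_third (j k : Fin 4) : ∃ i : Fin 4, i ≠ j ∧ i ≠ k := by
  revert j k; decide

lemma term_eq (Θ γ : ℝ) (j k : Fin 4) (f : Fin 4 → Fin 2) (b1 b2 : Fin 2)
    (g : Fin 4 → Fin 2) (hg : g = Function.update (Function.update f j b1) k b2)
    (i : Fin 4) (hij : i ≠ j) (hik : i ≠ k) :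
    ghzPhase Θ γ f * (starRingEnd ℂ) (ghzPhase Θ γ g) =
    ghzPhase Θ 0 f * (starRingEnd ℂ) (ghzPhase Θ 0 g) := by
  unfold ghzPhase
  have hgi : g i = f i := by
    rw [hg, Function.update_of_ne hik, Function.update_of_ne hij]
  by_cases hf0 : f = fun _ => 0
  · have hg1 : g ≠ fun _ => 1 := by
      intro h
      rw [h] at hgi; rw [hf0] at hgi; simp at hgi
    simp [hf0, hg1]
  · by_cases hf1 : f = fun _ => 1
    · have hg0 : g ≠ fun _ => 0 := by
        intro h
        rw [h] at hgi; rw [hf1] at hgi; simp at hgi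
      by_cases hg1 : g = fun _ => 1
      · have h10 : (fun _ : Fin 4 => (1 : Fin 2)) ≠ fun _ => 0 := by decide
        simp only [hf1, hg1, h10, if_false, if_neg h10, if_true, _root_.map_mul, ← Complex.exp_conj,
          Complex.conj_ofReal, map_neg]
        have hexp : Complex.exp ((γ:ℂ)*I) * Complex.exp (-((γ:ℂ)*I)) = 1 := by
          rw [← Complex.exp_add]; simp
        rw [Complex.conj_I]
        have h1 : (γ:ℂ) * -I = -((γ:ℂ)*I) := by ring
        have h2 : ((0:ℝ):ℂ) * -I = -(((0:ℝ):ℂ)*I) := by ring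
        rw [h1, h2]
        have hexp0 : Complex.exp (-(((0:ℝ):ℂ)*I)) = 1 := by simp
        have hexp0' : Complex.exp ((((0:ℝ):ℂ))*I) = 1 := by simp
        rw [hexp0, hexp0']
        linear_combination ((Real.cos Θ : ℂ) * (Real.cos Θ : ℂ)) * hexp
      · simp [hf1, hg0, hg1, (by decide : (fun _ : Fin 4 => (1:Fin 2)) ≠ fun _ => 0)]
    · simp [hf0, hf1]

lemma inner_eq (Θ γ : ℝ) : inner4 (ghzPhase Θ 0) (ghzPhase Θ γ) =
    (Real.sin Θ : ℂ) ^ 2 + Complex.exp (γ * I) * (Real.cos Θ : ℂ) ^ 2 := by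
  unfold inner4
  have key : ∀ f : Fin 4 → Fin 2, (starRingEnd ℂ) (ghzPhase Θ 0 f) * ghzPhase Θ γ f =
      (if f = (fun _ => 0) then (Real.sin Θ : ℂ) ^ 2 else 0) +
      (if f = (fun _ => 1) then Complex.exp (γ * I) * (Real.cos Θ : ℂ) ^ 2 else 0) := by
    intro f
    by_cases h0 : f = fun _ => 0
    · have h01 : (fun _ : Fin 4 => (0:Fin 2)) ≠ fun _ => 1 := by decide
      simp only [ghzPhase, h0, h01, if_true, if_false, if_neg h01, Complex.conj_ofReal]
      ring
    · by_cases h1 : f = fun _ => 1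
      · have h10 : (fun _ : Fin 4 => (1:Fin 2)) ≠ fun _ => 0 := by decide
        simp only [ghzPhase, h0, h1, if_false, if_true, if_neg h10, _root_.map_mul,
          Complex.conj_ofReal]
        have h2 : Complex.exp (((0:ℝ):ℂ) * I) = 1 := by simp
        rw [h2, _root_.map_one]
        ring
      · simp [ghzPhase, h0, h1]
  rw [Finset.sum_congr rfl fun f _ => key f, Finset.sum_add_distrib,
    Finset.sum_ite_eq' Finset.univ, Finset.sum_ite_eq' Finset.univ]
  simp

lemma fid_val (Θ γ : ℝ) :
    ‖(Real.sin Θ : ℂ) ^ 2 + Complex.exp (γ * I) * (Real.cos Θ : ℂ) ^ 2‖ ^ 2 =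
    (Real.sin Θ ^ 2 + Real.cos γ * Real.cos Θ ^ 2) ^ 2 + (Real.sin γ * Real.cos Θ ^ 2) ^ 2 := by
  rw [Complex.sq_norm]
  have h : (Real.sin Θ : ℂ) ^ 2 + Complex.exp (γ * I) * (Real.cos Θ : ℂ) ^ 2 =
      ((Real.sin Θ ^ 2 + Real.cos γ * Real.cos Θ ^ 2 : ℝ) : ℂ) +
      ((Real.sin γ * Real.cos Θ ^ 2 : ℝ) : ℂ) * I := by
    rw [Complex.exp_mul_I, ← Complex.ofReal_cos, ← Complex.ofReal_sin]
    push_cast; ring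
  rw [h, Complex.normSq_add_mul_I]

/-- For `ψ = sin Θ |0000⟩ + cos Θ |1111⟩` and `φ_γ = sin Θ |0000⟩ + e^{iγ} cos Θ |1111⟩`,
all two-qubit reduced density matrices of `φ_γ` equal those of `ψ`, the fidelity equals
`|sin²Θ + e^{iγ} cos²Θ|²`, and it is minimized over `γ` at `γ = π` with value `cos²(2Θ)`. -/
theorem ghz_family_rdm_and_fidelity (Θ : ℝ) :
    (∀ γ : ℝ, ∀ j k : Fin 4, j ≠ k →
      rdm2 (ghzPhase Θ γ) j k = rdm2 (ghzPhase Θ 0) j k) ∧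
    (∀ γ : ℝ, ‖inner4 (ghzPhase Θ 0) (ghzPhase Θ γ)‖ ^ 2 =
      ‖(Real.sin Θ : ℂ) ^ 2 + Complex.exp (γ * I) * (Real.cos Θ : ℂ) ^ 2‖ ^ 2) ∧
    (∀ γ : ℝ, ‖inner4 (ghzPhase Θ 0) (ghzPhase Θ Real.pi)‖ ^ 2 ≤
      ‖inner4 (ghzPhase Θ 0) (ghzPhase Θ γ)‖ ^ 2) ∧
    ‖inner4 (ghzPhase Θ 0) (ghzPhase Θ Real.pi)‖ ^ 2 = Real.cos (2 * Θ) ^ 2 := by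
  have hfid : ∀ γ : ℝ, ‖inner4 (ghzPhase Θ 0) (ghzPhase Θ γ)‖ ^ 2 =
      (Real.sin Θ ^ 2 + Real.cos γ * Real.cos Θ ^ 2) ^ 2 + (Real.sin γ * Real.cos Θ ^ 2) ^ 2 := by
    intro γ; rw [inner_eq, fid_val]
  have hpi : ‖inner4 (ghzPhase Θ 0) (ghzPhase Θ Real.pi)‖ ^ 2 =
      Real.cos (2 * Θ) ^ 2 := by
    rw [hfid, Real.cos_pi, Real.sin_pi, Real.cos_two_mul]
    nlinarith [Real.sin_sq_add_cos_sq Θ]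
  refine ⟨?_, ?_, ?_, hpi⟩
  · intro γ j k hjk
    ext a b
    unfold rdm2
    refine Finset.sum_congr rfl fun f _ => ?_
    obtain ⟨i, hij, hik⟩ := exists_third j k
    by_cases hc : f j = a.1 ∧ f k = a.2
    · simp only [hc, if_true]
      exact term_eq Θ γ j k f b.1 b.2 _ rfl i hij hik
    · simp [hc]
  · intro γ; rw [inner_eq, fid_val]
  · intro γ
    rw [hpi, hfid, Real.cos_two_mul]
    nlinarith [Real.sin_sq_add_cos_sq Θ, Real.sin_sq_add_cos_sq γ,
      Real.neg_one_le_cos γ, sq_nonneg (Real.sin Θ * Real.cos Θ),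
      sq_nonneg (Real.sin Θ * Real.cos Θ) , mul_self_nonneg (Real.sin γ * Real.cos Θ ^ 2)]
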